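/- Let h̄ ∈ Λ̂₀ be a local functional whose variational derivative satisfies δh̄/δu ∈ Im ∂ₓ. Then h̄ = ∫h dx for some differential polynomial h ∈ 𝒜̂₀ with ∂h/∂u₀ = 0. -/

import Mathlib

open scoped Classical
open PowerSeries

noncomputable section

namespace RiemannPaper

/-- ℂ[[u₀]] -/
abbrev RR : Type := PowerSeries ℂ
/-- 𝒜 = ℂ[[u₀]][u₁,u₂,…] -/
abbrev AA : Type := MvPolynomial ℕ+ RR
/-- 𝒜̂ = 𝒜[[ε]] -/
abbrev AH : Type := PowerSeries AA

/-- the variable uₙ as an element of 𝒜 (u₀ is the power-series variable of the coefficients) -/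
def uv (n : ℕ) : AA :=
  if h : 0 < n then MvPolynomial.X (⟨n, h⟩ : ℕ+) else MvPolynomial.C PowerSeries.X

/-- ∂/∂u₀ on 𝒜 -/
def pd0 (f : AA) : AA :=
  ∑ m ∈ f.support, MvPolynomial.monomial m (PowerSeries.derivativeFun (MvPolynomial.coeff m f))

/-- ∂/∂uₙ on 𝒜 -/
def pdA : ℕ → AA → AA
  | 0 => pd0
  | (n+1) => fun f => MvPolynomial.pderiv (⟨n+1, n.succ_pos⟩ : ℕ+) f

/-- ∂ₓ on 𝒜 -/
def dxA (f : AA) : AA := ∑ᶠ n : ℕ, uv (n+1) * pdA n f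

/-- coefficientwise (ℂ[[ε]]-linear) extension of an operator on 𝒜 to 𝒜̂ -/
def lift1 (F : AA → AA) (h : AH) : AH := PowerSeries.mk fun k => F (PowerSeries.coeff (R := AA) k h)

/-- ∂ₓ on 𝒜̂ -/
def dxH : AH → AH := lift1 dxA
/-- ∂/∂uₙ on 𝒜̂ -/
def pdH (n : ℕ) : AH → AH := lift1 (pdA n)
def negDxA (f : AA) : AA := -dxA f
def negDxH (h : AH) : AH := -dxH h

/-- evolutionary operator D_P = ∑ₙ (∂ₓⁿP)·∂/∂uₙ on 𝒜 -/
def DopA (P f : AA) : AA := ∑ᶠ n : ℕ, (dxA^[n] P) * pdA n f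
/-- evolutionary operator D_P on 𝒜̂ -/
def DopH (P f : AH) : AH :=
  PowerSeries.mk fun k => ∑ᶠ n : ℕ, PowerSeries.coeff (R := AA) k ((dxH^[n] P) * pdH n f)

/-- variational derivative δ/δu = ∑ₙ(−∂ₓ)ⁿ∘∂/∂uₙ on 𝒜 -/
def varDA (f : AA) : AA := ∑ᶠ n : ℕ, negDxA^[n] (pdA n f)
/-- variational derivative on 𝒜̂ -/
def varD (f : AH) : AH :=
  PowerSeries.mk fun k => ∑ᶠ n : ℕ, PowerSeries.coeff (R := AA) k (negDxH^[n] (pdH n f))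

/-- weighted degree of a monomial, deg uₙ = n -/
def wdeg (m : ℕ+ →₀ ℕ) : ℕ := m.sum fun i e => (i : ℕ) * e
/-- f is homogeneous of differential degree d -/
def homogA (f : AA) (d : ℤ) : Prop := ∀ m ∈ f.support, (wdeg m : ℤ) = d
/-- f ∈ 𝒜̂_d (deg ε = −1) -/
def memAH (d : ℤ) (f : AH) : Prop := ∀ k : ℕ, homogA (PowerSeries.coeff (R := AA) k f) (d + k)

/-- Im ∂ₓ ⊕ ℂ ⊂ 𝒜, so that Λ = 𝒜/NA -/
def NA : Submodule ℂ AA := Submodule.span ℂ (Set.range dxA ∪ Set.range (algebraMap ℂ AA))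
/-- Im ∂ₓ ⊕ ℂ[[ε]] ⊂ 𝒜̂, so that Λ̂ = 𝒜̂/NH -/
def NH : Submodule ℂ AH :=
  Submodule.span ℂ (Set.range dxH ∪ Set.range (⇑(PowerSeries.map (algebraMap ℂ AA))))

/-- ε ∈ 𝒜̂ -/
def epsH : AH := PowerSeries.X
/-- uₙ as an element of 𝒜̂ -/
def uH (n : ℕ) : AH := PowerSeries.C (R := AA) (uv n)

/-- a differential operator K = ∑ᵢ Kᵢ∂ₓ^i (finite sum) applied to f -/
def opApply (K : ℕ →₀ AH) (f : AH) : AH := K.sum fun i c => c * dxH^[i] f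
/-- L(Q) = ∑ₙ(∂Q/∂uₙ)∂ₓⁿ applied to f -/
def Lapp (Q f : AH) : AH :=
  PowerSeries.mk fun k => ∑ᶠ n : ℕ, PowerSeries.coeff (R := AA) k (pdH n Q * dxH^[n] f)
/-- L(Q)† = ∑ₙ(−∂ₓ)ⁿ∘(∂Q/∂uₙ) applied to f -/
def LadjApp (Q f : AH) : AH :=
  PowerSeries.mk fun k => ∑ᶠ n : ℕ, PowerSeries.coeff (R := AA) k (negDxH^[n] (pdH n Q * f))

/-- canonical representative of the bracket {f̄,h̄}_K = ∫ δf̄/δu · K(δh̄/δu) dx -/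
def brRep (K : ℕ →₀ AH) (f h : AH) : AH := varD f * opApply K (varD h)
/-- K is a Poisson operator: the bracket is skew-symmetric and satisfies Jacobi (in Λ̂) -/
def IsPoisson (K : ℕ →₀ AH) : Prop :=
  (∀ f h : AH, brRep K f h + brRep K h f ∈ NH) ∧
  (∀ f g h : AH,
    brRep K (brRep K f g) h + brRep K (brRep K g h) f + brRep K (brRep K h f) g ∈ NH)

/-- K has degree 1 -/
def opDeg1 (K : ℕ →₀ AH) : Prop := ∀ i : ℕ, memAH (1 - (i : ℤ)) (K i)
/-- K|_{ε=0} = ∂ₓ -/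
def opEps0Dx (K : ℕ →₀ AH) : Prop :=
  ∀ i : ℕ, PowerSeries.coeff (R := AA) 0 (K i) = if i = 1 then 1 else 0

/-- g ∈ ℂ[[u₀]] as an element of 𝒜̂ -/
def cH (g : RR) : AH := PowerSeries.C (R := AA) (MvPolynomial.C g)
/-- truncation of an element of 𝒜̂ keeping the ε-coefficients up to εᵏ -/
def truncAH (k : ℕ) (h : AH) : AH :=
  ∑ i ∈ Finset.range (k+1), (PowerSeries.monomial (R := AA) i) (PowerSeries.coeff (R := AA) i h)
/-- the Taylor evaluation g(w) for g ∈ ℂ[[u₀]] and w ≡ u₀ mod ε -/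
def tayl (g : RR) (w : AH) : AH := PowerSeries.mk fun k =>
  PowerSeries.coeff (R := AA) k (∑ j ∈ Finset.range (k+1),
    ((j.factorial : ℂ))⁻¹ • (cH (PowerSeries.derivativeFun^[j] g) * (w - uH 0) ^ j))

/-- S is the substitution map S_w, the unique continuous ℂ[[ε]]-algebra endomorphism of 𝒜̂
with S(uₙ) = ∂ₓⁿ(w) -/
structure IsSubst (w : AH) (S : AH → AH) : Prop where
  map_add : ∀ a b, S (a + b) = S a + S b
  map_mul : ∀ a b, S (a * b) = S a * S b
  map_one : S 1 = 1
  map_smul : ∀ (c : ℂ) (a), S (c • a) = c • S a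
  map_eps : ∀ a, S (epsH * a) = epsH * S a
  map_u : ∀ n : ℕ, S (uH n) = dxH^[n] w
  map_ps : ∀ g : RR, S (cH g) = tayl g w
  cont : ∀ a (k : ℕ),
    PowerSeries.coeff (R := AA) k (S a) = PowerSeries.coeff (R := AA) k (S (truncAH k a))

/-- w is a Miura transformation: w = u₀ + εf, f ∈ 𝒜̂₁ -/
def isMiura (w : AH) : Prop := ∃ f : AH, memAH 1 f ∧ w = uH 0 + epsH * f
/-- w belongs to Mi_{∂ₓ}: L(w)∘∂ₓ∘L(w)† = ∂ₓ -/
def inMiDx (w : AH) : Prop := ∀ f : AH, Lapp w (dxH (LadjApp w f)) = dxH f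
/-- w is a normal Miura transformation: w = u₀ + ∂ₓ²P, P ∈ 𝒜̂₋₂ -/
def isNormalMiura (w : AH) : Prop := ∃ P : AH, memAH (-2) P ∧ w = uH 0 + dxH (dxH P)

/-- u_λ = ∏ᵢ u_{λᵢ} -/
def uP {n : ℕ} (l : n.Partition) : AA := (l.parts.map uv).prod
/-- the parts of λ sorted in decreasing order -/
def sortedParts {n : ℕ} (l : n.Partition) : List ℕ := (l.parts.sort (· ≤ ·)).reverse
/-- lexicographic order on partitions -/
def lexLt {n : ℕ} (l m : n.Partition) : Prop :=
  List.Lex (· < ·) (sortedParts l) (sortedParts m)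
def lexLe {n : ℕ} (l m : n.Partition) : Prop := lexLt l m ∨ l = m
/-- λ ∈ 𝒫ₙ°: at least two parts and λ₁ = λ₂ -/
def Pcirc {n : ℕ} (l : n.Partition) : Prop :=
  2 ≤ Multiset.card l.parts ∧ (sortedParts l).getD 0 0 = (sortedParts l).getD 1 0
/-- λ ∈ 𝒫ₙ′: λ ∈ 𝒫ₙ° and all parts ≥ 2 -/
def Pprime {n : ℕ} (l : n.Partition) : Prop := Pcirc l ∧ ∀ i ∈ l.parts, 2 ≤ i
/-- (λ,1): adjoin a part equal to 1 -/
def addOne {n : ℕ} (l : n.Partition) : (n+1).Partition where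
  parts := 1 ::ₘ l.parts
  parts_pos := by
    intro i hi
    rcases Multiset.mem_cons.mp hi with h | h
    · simp [h]
    · exact l.parts_pos h
  parts_sum := by simp [l.parts_sum, add_comm]


section Aux

/-! ### power series helpers -/

lemma derivFun_zero : PowerSeries.derivativeFun (0 : RR) = 0 := by
  exact (PowerSeries.derivative ℂ).map_zero

lemma derivFun_sub (a b : RR) :
    PowerSeries.derivativeFun (a - b) =
      PowerSeries.derivativeFun a - PowerSeries.derivativeFun b := by
  exact (PowerSeries.derivative ℂ).map_sub a b

lemma derivFun_mul_C (a : RR) (c : ℂ) :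
    PowerSeries.derivativeFun (a * PowerSeries.C (R := ℂ) c) =
      PowerSeries.derivativeFun a * PowerSeries.C (R := ℂ) c := by
  rw [PowerSeries.derivativeFun_mul, (by exact PowerSeries.derivative_C :
      PowerSeries.derivativeFun (PowerSeries.C (R := ℂ) c) = 0), smul_zero, zero_add,
    smul_eq_mul, mul_comm]

/-- formal antiderivative with zero constant term -/
def intg (g : RR) : RR :=
  PowerSeries.mk fun n => if n = 0 then 0 else ((n : ℂ))⁻¹ * PowerSeries.coeff (R := ℂ) (n - 1) g

lemma derivFun_intg (g : RR) : PowerSeries.derivativeFun (intg g) = g := by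
  ext n
  change PowerSeries.coeff n (PowerSeries.derivative ℂ (intg g)) = _
  rw [PowerSeries.coeff_derivative, intg, PowerSeries.coeff_mk]
  have h1 : (n + 1 : ℕ) ≠ 0 := n.succ_ne_zero
  have h2 : ((n : ℂ) + 1) ≠ 0 := Nat.cast_add_one_ne_zero n
  rw [if_neg h1]
  push_cast
  field_simp

lemma intg_zero : intg (0 : RR) = 0 := by
  ext n
  simp [intg]

/-! ### clean positive naturals -/

/-- `n+1` as an element of ℕ+, elaborated with clean types -/
def pn (n : ℕ) : ℕ+ := ⟨n + 1, n.succ_pos⟩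

lemma pn_val (n : ℕ) : ((pn n : ℕ+) : ℕ) = n + 1 := rfl

lemma pdA_zero_eq (f : AA) : pdA 0 f = pd0 f := rfl

lemma pdA_succ (n : ℕ) (f : AA) : pdA (n+1) f = MvPolynomial.pderiv (pn n) f := rfl

lemma uv_succ (n : ℕ) : uv (n+1) = MvPolynomial.X (pn n) := dif_pos _

lemma pderiv_monomial' (i : ℕ+) (m : ℕ+ →₀ ℕ) (c : RR) :
    MvPolynomial.pderiv i (MvPolynomial.monomial m c) =
      MvPolynomial.monomial (m - Finsupp.single i 1) (c * (m i : RR)) :=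
  MvPolynomial.pderiv_monomial

lemma X_mul_monomial' (i : ℕ+) (m : ℕ+ →₀ ℕ) (c : RR) :
    MvPolynomial.X i * MvPolynomial.monomial m c =
      MvPolynomial.monomial (Finsupp.single i 1 + m) c := by
  rw [MvPolynomial.monomial_single_add, pow_one]

/-! ### coefficient lemmas for pd0, IA -/

lemma coeff_sum_monomial (s : Finset (ℕ+ →₀ ℕ)) (c : (ℕ+ →₀ ℕ) → RR) (m : ℕ+ →₀ ℕ) :
    MvPolynomial.coeff m (∑ m' ∈ s, MvPolynomial.monomial m' (c m')) =
      if m ∈ s then c m else 0 := by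
  rw [MvPolynomial.coeff_sum]
  simp_rw [MvPolynomial.coeff_monomial]
  exact Finset.sum_ite_eq' s m c

lemma coeff_pd0 (f : AA) (m : ℕ+ →₀ ℕ) :
    MvPolynomial.coeff m (pd0 f) =
      PowerSeries.derivativeFun (MvPolynomial.coeff m f) := by
  rw [pd0, coeff_sum_monomial]
  split
  · rfl
  · rw [MvPolynomial.notMem_support_iff.mp ‹_›, derivFun_zero]

lemma pd0_monomial (m : ℕ+ →₀ ℕ) (g : RR) :
    pd0 (MvPolynomial.monomial m g) =
      MvPolynomial.monomial m (PowerSeries.derivativeFun g) := by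
  refine MvPolynomial.ext _ _ fun m' => ?_
  rw [coeff_pd0, MvPolynomial.coeff_monomial, MvPolynomial.coeff_monomial]
  split
  · rfl
  · exact derivFun_zero

lemma pd0_add (a b : AA) : pd0 (a + b) = pd0 a + pd0 b := by
  refine MvPolynomial.ext _ _ fun m => ?_
  rw [MvPolynomial.coeff_add, coeff_pd0, MvPolynomial.coeff_add, coeff_pd0, coeff_pd0,
    PowerSeries.derivativeFun_add]

lemma pd0_sub (a b : AA) : pd0 (a - b) = pd0 a - pd0 b := by
  refine MvPolynomial.ext _ _ fun m => ?_
  rw [MvPolynomial.coeff_sub, coeff_pd0, MvPolynomial.coeff_sub, coeff_pd0, coeff_pd0,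
    derivFun_sub]

lemma pd0_zero : pd0 (0 : AA) = 0 := by
  refine MvPolynomial.ext _ _ fun m => ?_
  simp [coeff_pd0, derivFun_zero]

lemma pd0_finset_sum {α : Type*} (s : Finset α) (F : α → AA) :
    pd0 (∑ i ∈ s, F i) = ∑ i ∈ s, pd0 (F i) := by
  induction s using Finset.cons_induction with
  | empty => simpa using pd0_zero
  | cons a s ha ih => rw [Finset.sum_cons, Finset.sum_cons, pd0_add, ih]

lemma pd0_pderiv (i : ℕ+) (f : AA) :
    pd0 (MvPolynomial.pderiv i f) = MvPolynomial.pderiv i (pd0 f) := by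
  induction f using MvPolynomial.induction_on' with
  | monomial m a =>
    rw [pderiv_monomial', pd0_monomial, pd0_monomial, pderiv_monomial',
      ← map_natCast (PowerSeries.C (R := ℂ)) (m i), derivFun_mul_C]
  | add p q hp hq => rw [map_add, pd0_add, pd0_add, map_add, hp, hq]

lemma pd0_X_mul (i : ℕ+) (x : AA) :
    pd0 (MvPolynomial.X i * x) = MvPolynomial.X i * pd0 x := by
  refine MvPolynomial.ext _ _ fun m => ?_
  rw [coeff_pd0, MvPolynomial.coeff_X_mul', MvPolynomial.coeff_X_mul']
  split
  · rw [coeff_pd0]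
  · exact derivFun_zero

/-- formal antiderivative in u₀ on 𝒜 -/
def IA (f : AA) : AA :=
  ∑ m ∈ f.support, MvPolynomial.monomial m (intg (MvPolynomial.coeff m f))

lemma coeff_IA (f : AA) (m : ℕ+ →₀ ℕ) :
    MvPolynomial.coeff m (IA f) = intg (MvPolynomial.coeff m f) := by
  rw [IA, coeff_sum_monomial]
  split
  · rfl
  · rw [MvPolynomial.notMem_support_iff.mp ‹_›, intg_zero]

lemma pd0_IA (f : AA) : pd0 (IA f) = f := by
  refine MvPolynomial.ext _ _ fun m => ?_
  rw [coeff_pd0, coeff_IA, derivFun_intg]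

/-! ### pdA basics -/

lemma pdA_add (n : ℕ) (a b : AA) : pdA n (a + b) = pdA n a + pdA n b := by
  cases n with
  | zero => exact pd0_add a b
  | succ k => exact map_add (MvPolynomial.pderiv (pn k)) a b

lemma pdA_zero_poly (n : ℕ) : pdA n (0 : AA) = 0 := by
  cases n with
  | zero => exact pd0_zero
  | succ k => exact map_zero (MvPolynomial.pderiv (pn k))

lemma pd0_pdA (n : ℕ) (f : AA) : pd0 (pdA n f) = pdA n (pd0 f) := by
  cases n with
  | zero => rfl
  | succ k => exact pd0_pderiv _ f

/-- a bound beyond which all ∂/∂uₙ of f vanish -/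
def bnd (f : AA) : ℕ := (f.support.sup fun m => m.support.sup fun i => (i : ℕ)) + 1

lemma pdA_eq_zero {f : AA} {n : ℕ} (h : bnd f ≤ n) : pdA n f = 0 := by
  obtain ⟨k, rfl⟩ : ∃ k, n = k + 1 := by
    cases n with
    | zero => exact absurd h (by simp only [bnd]; omega)
    | succ k => exact ⟨k, rfl⟩
  rw [pdA_succ]
  apply MvPolynomial.pderiv_eq_zero_of_notMem_vars
  intro hv
  obtain ⟨m, hm, hi⟩ := (MvPolynomial.mem_vars _).mp hv
  have h1 : ((pn k : ℕ+) : ℕ) ≤ m.support.sup fun j => (j : ℕ) :=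
    Finset.le_sup (f := fun j : ℕ+ => (j : ℕ)) hi
  have h2 : (m.support.sup fun j => (j : ℕ)) ≤
      f.support.sup fun m' => m'.support.sup fun j => (j : ℕ) :=
    Finset.le_sup (f := fun m' : ℕ+ →₀ ℕ => m'.support.sup fun j => (j : ℕ)) hm
  have h3 : ((pn k : ℕ+) : ℕ) = k + 1 := rfl
  simp only [bnd] at h
  omega

/-! ### dxA basics -/

lemma dxA_eq_sum (f : AA) {N : ℕ} (h : ∀ n, N ≤ n → pdA n f = 0) :
    dxA f = ∑ n ∈ Finset.range N, uv (n+1) * pdA n f := by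
  apply finsum_eq_finset_sum_of_support_subset
  intro n hn
  simp only [Function.mem_support] at hn
  simp only [Finset.coe_range, Set.mem_Iio]
  by_contra hN
  exact hn (by rw [h n (Nat.le_of_not_lt hN), mul_zero])

lemma dxA_zero : dxA (0 : AA) = 0 := by
  rw [dxA_eq_sum (0 : AA) (N := 0) (fun n _ => pdA_zero_poly n), Finset.range_zero,
    Finset.sum_empty]

lemma dxA_add (a b : AA) : dxA (a + b) = dxA a + dxA b := by
  set N := max (bnd a) (bnd b) with hN
  rw [dxA_eq_sum a (N := N) (fun n hn => pdA_eq_zero (le_trans (le_max_left _ _) hn)),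
    dxA_eq_sum b (N := N) (fun n hn => pdA_eq_zero (le_trans (le_max_right _ _) hn)),
    dxA_eq_sum (a + b) (N := N) (fun n hn => by
      rw [pdA_add, pdA_eq_zero (le_trans (le_max_left _ _) hn),
        pdA_eq_zero (le_trans (le_max_right _ _) hn), add_zero]),
    ← Finset.sum_add_distrib]
  exact Finset.sum_congr rfl fun n _ => by rw [pdA_add, mul_add]

lemma dxA_finset_sum {α : Type*} (s : Finset α) (F : α → AA) :
    dxA (∑ i ∈ s, F i) = ∑ i ∈ s, dxA (F i) := by
  induction s using Finset.cons_induction with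
  | empty => simpa using dxA_zero
  | cons a s ha ih => rw [Finset.sum_cons, Finset.sum_cons, dxA_add, ih]

lemma pd0_dxA (f : AA) : pd0 (dxA f) = dxA (pd0 f) := by
  rw [dxA_eq_sum f (N := bnd f) (fun n hn => pdA_eq_zero hn),
    dxA_eq_sum (pd0 f) (N := bnd f) (fun n hn => by
      rw [← pd0_pdA, pdA_eq_zero hn, pd0_zero]),
    pd0_finset_sum]
  refine Finset.sum_congr rfl fun n _ => ?_
  rw [uv_succ, pd0_X_mul, pd0_pdA]

/-! ### weighted degree and homogeneity -/

lemma wdeg_add (a b : ℕ+ →₀ ℕ) : wdeg (a + b) = wdeg a + wdeg b := by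
  unfold wdeg
  exact Finsupp.sum_add_index' (fun i => mul_zero _) (fun i e₁ e₂ => mul_add _ _ _)

lemma wdeg_single (i : ℕ+) (e : ℕ) : wdeg (Finsupp.single i e) = (i : ℕ) * e :=
  Finsupp.sum_single_index (mul_zero _)

lemma wdeg_sub_single {m : ℕ+ →₀ ℕ} {i : ℕ+} (h : m i ≠ 0) :
    wdeg (m - Finsupp.single i 1) + (i : ℕ) = wdeg m := by
  have hm : (m - Finsupp.single i 1) + Finsupp.single i 1 = m := by
    ext j
    rcases eq_or_ne j i with rfl | hj
    · rw [Finsupp.add_apply, Finsupp.tsub_apply]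
      simp only [Finsupp.single_eq_same]
      omega
    · rw [Finsupp.add_apply, Finsupp.tsub_apply, Finsupp.single_eq_of_ne hj]
      omega
  conv_rhs => rw [← hm]
  rw [wdeg_add, wdeg_single, mul_one]

/-- homogeneity with natural degree -/
def homN (d : ℕ) (f : AA) : Prop := ∀ m ∈ f.support, wdeg m = d

lemma homN_zero (d : ℕ) : homN d (0 : AA) := by
  intro m hm
  simp at hm

lemma homN_monomial (m : ℕ+ →₀ ℕ) (g : RR) :
    homN (wdeg m) (MvPolynomial.monomial m g) := by
  intro m' hm'
  have h := MvPolynomial.mem_support_iff.mp hm'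
  rw [MvPolynomial.coeff_monomial] at h
  by_cases hmm : m = m'
  · rw [← hmm]
  · rw [if_neg hmm] at h
    exact absurd rfl h

lemma homN_sum {α : Type*} {s : Finset α} {F : α → AA} {d : ℕ}
    (h : ∀ i ∈ s, homN d (F i)) : homN d (∑ i ∈ s, F i) := by
  intro m hm
  have hne := MvPolynomial.mem_support_iff.mp hm
  rw [MvPolynomial.coeff_sum] at hne
  obtain ⟨i, hi, hci⟩ := Finset.exists_ne_zero_of_sum_ne_zero hne
  exact h i hi m (MvPolynomial.mem_support_iff.mpr hci)

lemma homN_sub {a b : AA} {d : ℕ} (ha : homN d a) (hb : homN d b) : homN d (a - b) := by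
  intro m hm
  have hne := MvPolynomial.mem_support_iff.mp hm
  rw [MvPolynomial.coeff_sub] at hne
  by_cases h0 : MvPolynomial.coeff m a = 0
  · refine hb m (MvPolynomial.mem_support_iff.mpr fun hb0 => ?_)
    rw [h0, hb0, sub_zero] at hne
    exact hne rfl
  · exact ha m (MvPolynomial.mem_support_iff.mpr h0)

/-- projection to the homogeneous component of degree d -/
def projA (d : ℕ) (f : AA) : AA :=
  ∑ m ∈ f.support.filter (fun m => wdeg m = d), MvPolynomial.monomial m (MvPolynomial.coeff m f)

lemma coeff_projA (d : ℕ) (f : AA) (m : ℕ+ →₀ ℕ) :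
    MvPolynomial.coeff m (projA d f) = if wdeg m = d then MvPolynomial.coeff m f else 0 := by
  rw [projA, coeff_sum_monomial]
  simp only [Finset.mem_filter, MvPolynomial.mem_support_iff]
  by_cases h1 : wdeg m = d
  · by_cases h2 : MvPolynomial.coeff m f = 0 <;> simp [h1, h2]
  · simp [h1]

lemma projA_zero_poly (d : ℕ) : projA d (0 : AA) = 0 := by
  refine MvPolynomial.ext _ _ fun m => ?_
  simp [coeff_projA]

lemma projA_add (d : ℕ) (a b : AA) : projA d (a + b) = projA d a + projA d b := by
  refine MvPolynomial.ext _ _ fun m => ?_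
  simp only [coeff_projA, MvPolynomial.coeff_add]
  split <;> simp

lemma projA_finset_sum {α : Type*} (d : ℕ) (s : Finset α) (F : α → AA) :
    projA d (∑ i ∈ s, F i) = ∑ i ∈ s, projA d (F i) := by
  induction s using Finset.cons_induction with
  | empty => simpa using projA_zero_poly d
  | cons a s ha ih => rw [Finset.sum_cons, Finset.sum_cons, projA_add, ih]

lemma homN_projA (d : ℕ) (f : AA) : homN d (projA d f) := by
  intro m hm
  have h := MvPolynomial.mem_support_iff.mp hm
  rw [coeff_projA] at h
  by_contra hc
  rw [if_neg hc] at h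
  exact h rfl

lemma projA_eq_self {d : ℕ} {f : AA} (h : homN d f) : projA d f = f := by
  refine MvPolynomial.ext _ _ fun m => ?_
  rw [coeff_projA]
  by_cases hm : wdeg m = d
  · rw [if_pos hm]
  · rw [if_neg hm]
    by_contra hne
    exact hm (h m (MvPolynomial.mem_support_iff.mpr fun h0 => hne h0.symm))

lemma projA_eq_zero {d e : ℕ} {f : AA} (h : homN e f) (hde : e ≠ d) : projA d f = 0 := by
  refine MvPolynomial.ext _ _ fun m => ?_
  rw [coeff_projA, MvPolynomial.coeff_zero]
  by_cases hm : wdeg m = d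
  · rw [if_pos hm]
    by_contra hne
    have := h m (MvPolynomial.mem_support_iff.mpr hne)
    omega
  · exact if_neg hm

lemma pd0_projA (d : ℕ) (f : AA) : pd0 (projA d f) = projA d (pd0 f) := by
  refine MvPolynomial.ext _ _ fun m => ?_
  rw [coeff_pd0, coeff_projA, coeff_projA, coeff_pd0]
  split
  · rfl
  · exact derivFun_zero

/-! ### dxA is graded of degree +1 -/

lemma homN_dxA_monomial (m : ℕ+ →₀ ℕ) (g : RR) :
    homN (wdeg m + 1) (dxA (MvPolynomial.monomial m g)) := by
  rw [dxA_eq_sum _ (N := bnd (MvPolynomial.monomial m g)) (fun n hn => pdA_eq_zero hn)]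
  apply homN_sum
  intro n _
  cases n with
  | zero =>
    rw [uv_succ, pdA_zero_eq, pd0_monomial, X_mul_monomial']
    intro m' hm'
    rw [homN_monomial _ _ m' hm', wdeg_add, wdeg_single, pn_val]
    omega
  | succ k =>
    rw [uv_succ, pdA_succ, pderiv_monomial']
    by_cases hmi : m (pn k) = 0
    · rw [hmi, Nat.cast_zero, mul_zero, map_zero, mul_zero]
      exact homN_zero _
    · rw [X_mul_monomial']
      intro m' hm'
      rw [homN_monomial _ _ m' hm', wdeg_add, wdeg_single, pn_val]
      have h1 := wdeg_sub_single (m := m) (i := pn k) hmi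
      have h2 : ((pn k : ℕ+) : ℕ) = k + 1 := rfl
      omega

lemma projA_succ_dxA (d : ℕ) (f : AA) : projA (d+1) (dxA f) = dxA (projA d f) := by
  conv_lhs => rw [f.as_sum]
  conv_rhs => rw [f.as_sum]
  rw [dxA_finset_sum, projA_finset_sum, projA_finset_sum, dxA_finset_sum]
  refine Finset.sum_congr rfl fun m hm => ?_
  by_cases h : wdeg m = d
  · have e1 : projA d (MvPolynomial.monomial m (MvPolynomial.coeff m f)) =
        MvPolynomial.monomial m (MvPolynomial.coeff m f) :=
      projA_eq_self (h ▸ homN_monomial m _)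
    have e2 : projA (d+1) (dxA (MvPolynomial.monomial m (MvPolynomial.coeff m f))) =
        dxA (MvPolynomial.monomial m (MvPolynomial.coeff m f)) := by
      refine projA_eq_self ?_
      have hh := homN_dxA_monomial m (MvPolynomial.coeff m f)
      rwa [h] at hh
    rw [e1, e2]
  · rw [projA_eq_zero (homN_monomial m _) h, dxA_zero,
      projA_eq_zero (homN_dxA_monomial m _) (by omega)]

lemma projA_zero_dxA (f : AA) : projA 0 (dxA f) = 0 := by
  conv_lhs => rw [f.as_sum]
  rw [dxA_finset_sum, projA_finset_sum]
  exact Finset.sum_eq_zero fun m hm =>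
    projA_eq_zero (homN_dxA_monomial m _) (by omega)

/-! ### varDA and the key construction -/

lemma negDxA_iter_zero (n : ℕ) : negDxA^[n] (0 : AA) = 0 :=
  Function.iterate_fixed (by rw [negDxA, dxA_zero, neg_zero]) n

lemma varDA_eq_sum (f : AA) :
    varDA f = ∑ n ∈ Finset.range (bnd f + 1), negDxA^[n] (pdA n f) := by
  apply finsum_eq_finset_sum_of_support_subset
  intro n hn
  simp only [Function.mem_support] at hn
  simp only [Finset.coe_range, Set.mem_Iio]
  by_contra hN
  have h1 : bnd f ≤ n := by omega
  exact hn (by rw [pdA_eq_zero h1, negDxA_iter_zero])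

lemma key (f gk : AA) (hv : varDA f = dxA gk) : ∃ G : AA, pd0 f = dxA G := by
  classical
  set S : AA := ∑ n ∈ Finset.range (bnd f), negDxA^[n] (pdA (n+1) f) with hS
  refine ⟨gk + S, ?_⟩
  have h1 : varDA f = - dxA S + pd0 f := by
    rw [varDA_eq_sum, Finset.sum_range_succ']
    congr 1
    rw [hS, dxA_finset_sum, ← Finset.sum_neg_distrib]
    refine Finset.sum_congr rfl fun n _ => ?_
    rw [Function.iterate_succ_apply']
    rfl
  rw [dxA_add, ← hv, h1]
  ring

/-! ### lifting to 𝒜̂ -/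

lemma coeff_dxH (k : ℕ) (x : AH) :
    PowerSeries.coeff (R := AA) k (dxH x) = dxA (PowerSeries.coeff (R := AA) k x) := by
  unfold dxH lift1
  exact PowerSeries.coeff_mk _ _

lemma coeff_pdH (n k : ℕ) (x : AH) :
    PowerSeries.coeff (R := AA) k (pdH n x) = pdA n (PowerSeries.coeff (R := AA) k x) := by
  unfold pdH lift1
  exact PowerSeries.coeff_mk _ _

lemma coeff_negDxH_iter (n k : ℕ) (x : AH) :
    PowerSeries.coeff (R := AA) k (negDxH^[n] x) = negDxA^[n] (PowerSeries.coeff (R := AA) k x) := by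
  induction n generalizing x with
  | zero => rfl
  | succ n ih =>
    rw [Function.iterate_succ_apply, ih, Function.iterate_succ_apply]
    congr 1
    rw [negDxH, map_neg, coeff_dxH]
    rfl

lemma coeff_varD (k : ℕ) (f : AH) :
    PowerSeries.coeff (R := AA) k (varD f) = varDA (PowerSeries.coeff (R := AA) k f) := by
  rw [varD, PowerSeries.coeff_mk, varDA]
  exact finsum_congr fun n => by rw [coeff_negDxH_iter, coeff_pdH]

end Aux


/-- Corollary 2.4(2): if h̄ ∈ Λ̂₀ satisfies δh̄/δu ∈ Im ∂ₓ, then h̄ = ∫h dx for some h with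
∂h/∂u₀ = 0. (Stated on representatives: h₀ represents h̄.) -/
theorem stmt6 (h₀ : AH) (hmem : memAH 0 h₀) (hvar : ∃ g : AH, varD h₀ = dxH g) :
    ∃ h : AH, memAH 0 h ∧ pdH 0 h = 0 ∧ h₀ - h ∈ NH := by
  classical
  obtain ⟨g, hg⟩ := hvar
  have hKey : ∀ k : ℕ, ∃ G : AA, pd0 (PowerSeries.coeff (R := AA) k h₀) = dxA G := by
    intro k
    apply key _ (PowerSeries.coeff (R := AA) k g)
    have := congrArg (PowerSeries.coeff (R := AA) k) hg
    rwa [coeff_varD, coeff_dxH] at this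
  choose G hG using hKey
  have hf : ∀ k, homN k (PowerSeries.coeff (R := AA) k h₀) := by
    intro k m hm
    have := hmem k m hm
    omega
  set h : AH := PowerSeries.mk fun k =>
    PowerSeries.coeff (R := AA) k h₀ - projA k (dxA (IA (G k))) with hh
  set w : AH := PowerSeries.mk fun k =>
    match k with
    | 0 => (0 : AA)
    | (d+1) => projA d (IA (G (d+1))) with hw
  refine ⟨h, ?_, ?_, ?_⟩
  · intro k m hm
    rw [hh, PowerSeries.coeff_mk] at hm
    have hwd : wdeg m = k := homN_sub (hf k) (homN_projA k _) m hm
    omega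
  · apply PowerSeries.ext
    intro k
    rw [coeff_pdH, map_zero, hh, PowerSeries.coeff_mk]
    show pd0 (PowerSeries.coeff (R := AA) k h₀ - projA k (dxA (IA (G k)))) = 0
    rw [pd0_sub, pd0_projA, pd0_dxA, pd0_IA, ← hG k, ← pd0_projA,
      projA_eq_self (hf k), sub_self]
  · have heq : h₀ - h = dxH w := by
      apply PowerSeries.ext
      intro k
      rw [map_sub, coeff_dxH, hh, hw, PowerSeries.coeff_mk, PowerSeries.coeff_mk]
      cases k with
      | zero =>
        show PowerSeries.coeff (R := AA) 0 h₀ -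
          (PowerSeries.coeff (R := AA) 0 h₀ - projA 0 (dxA (IA (G 0)))) = dxA 0
        rw [projA_zero_dxA, dxA_zero, sub_zero, sub_self]
      | succ d =>
        show PowerSeries.coeff (R := AA) (d+1) h₀ -
          (PowerSeries.coeff (R := AA) (d+1) h₀ - projA (d+1) (dxA (IA (G (d+1))))) =
            dxA (projA d (IA (G (d+1))))
        rw [sub_sub_cancel]
        exact projA_succ_dxA d _
    rw [heq]
    exact Submodule.subset_span (Set.mem_union_left _ ⟨w, rfl⟩)

end RiemannPaper
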